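/- Let X ∈ ℝ^{m×n} with XXᵀ = UΛUᵀ, where U ∈ ℝ^{m×m} is orthogonal and Λ is diagonal with pairwise distinct positive diagonal entries. If W₁ ∈ ℝ^{k×m}, W₂ ∈ ℝ^{m×k} form a critical point of the unregularized loss L, i.e. W₂ᵀ(W₂W₁ − I_m)XXᵀ = 0 and (W₂W₁ − I_m)XXᵀW₁ᵀ = 0, then there exists an index set 𝓘 ⊆ {1,…,m} with |𝓘| ≤ k such that W₂W₁ = U P_𝓘 Uᵀ, where P_𝓘 is the 0/1 diagonal matrix with (P_𝓘)ᵢᵢ = 1 exactly for i ∈ 𝓘. In particular, W₂W₁ is the orthogonal projection onto the span of the eigenvectors of XXᵀ indexed by 𝓘. -/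

import Mathlib

open Matrix

/-- At a critical point of the unregularized LAE loss, `W₂W₁` is the orthogonal
projection `U P_𝓘 Uᵀ` onto the span of at most `k` eigenvectors of `XXᵀ`. -/
theorem unregularized_critical_points {m n k : ℕ}
    (X : Matrix (Fin m) (Fin n) ℝ)
    (U : Matrix (Fin m) (Fin m) ℝ) (l : Fin m → ℝ)
    (hU : Uᵀ * U = 1)
    (hXXt : X * Xᵀ = U * Matrix.diagonal l * Uᵀ)
    (hpos : ∀ i, 0 < l i)
    (hdist : ∀ i j : Fin m, i ≠ j → l i ≠ l j)
    (W1 : Matrix (Fin k) (Fin m) ℝ) (W2 : Matrix (Fin m) (Fin k) ℝ)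
    (h1 : W2ᵀ * (W2 * W1 - 1) * (X * Xᵀ) = 0)
    (h2 : (W2 * W1 - 1) * (X * Xᵀ) * W1ᵀ = 0) :
    ∃ I : Finset (Fin m), I.card ≤ k ∧
      W2 * W1 = U * Matrix.diagonal (fun i => if i ∈ I then (1 : ℝ) else 0) * Uᵀ := by
  classical
  obtain ⟨P, hP⟩ : ∃ P, P = W2 * W1 := ⟨_, rfl⟩
  obtain ⟨S, hSdef⟩ : ∃ S, S = X * Xᵀ := ⟨_, rfl⟩
  rw [← hSdef] at h1 h2 hXXt
  rw [← hP] at h1 h2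
  have hUU : U * Uᵀ = 1 := mul_eq_one_comm.mp hU
  -- determinant facts
  have hdetU : U.det * U.det = 1 := by
    have := congrArg Matrix.det hU
    rwa [Matrix.det_mul, Matrix.det_one, Matrix.det_transpose] at this
  have hdetU' : IsUnit U.det := IsUnit.of_mul_eq_one _ hdetU
  have hdetUt : IsUnit Uᵀ.det := by rw [Matrix.det_transpose]; exact hdetU'
  have hdetS : IsUnit S.det := by
    have hd : S.det = ∏ i, l i := by
      rw [hXXt, Matrix.det_mul, Matrix.det_mul, Matrix.det_diagonal,
        Matrix.det_transpose, mul_right_comm, hdetU, one_mul]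
    rw [hd]
    exact isUnit_iff_ne_zero.mpr (Finset.prod_ne_zero_iff.mpr fun i _ => (hpos i).ne')
  have hSinv : S * S⁻¹ = 1 := Matrix.mul_nonsing_inv S hdetS
  have hPtdef : Pᵀ = W1ᵀ * W2ᵀ := by rw [hP, Matrix.transpose_mul]
  -- Step 1: P is an orthogonal projection
  have e1 : Pᵀ * (P - 1) * S = 0 := by
    have h : W1ᵀ * (W2ᵀ * (P - 1) * S) = 0 := by rw [h1, Matrix.mul_zero]
    rw [hPtdef]
    simp only [Matrix.mul_assoc] at h ⊢
    exact h
  have e1' : Pᵀ * (P - 1) = 0 := by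
    have h : Pᵀ * (P - 1) * S * S⁻¹ = 0 := by rw [e1, Matrix.zero_mul]
    rwa [Matrix.mul_assoc, hSinv, Matrix.mul_one] at h
  have hPtP : Pᵀ * P = Pᵀ := by
    rw [Matrix.mul_sub, Matrix.mul_one, sub_eq_zero] at e1'
    exact e1'
  have hPtP' : Pᵀ * P = P := by
    have h := congrArg Matrix.transpose hPtP
    rwa [Matrix.transpose_mul, Matrix.transpose_transpose] at h
  have hPsymm : Pᵀ = P := hPtP.symm.trans hPtP'
  have hPidem : P * P = P := by nth_rewrite 1 [← hPsymm]; exact hPtP'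
  have hSsymm : Sᵀ = S := by rw [hSdef, Matrix.transpose_mul, Matrix.transpose_transpose]
  -- Step 2: P commutes with S
  have hWWP : W1ᵀ * W2ᵀ = P := hPtdef.symm.trans hPsymm
  have e2 : (P - 1) * S * P = 0 := by
    have h : (P - 1) * S * W1ᵀ * W2ᵀ = 0 := by rw [h2, Matrix.zero_mul]
    rwa [Matrix.mul_assoc ((P - 1) * S), hWWP] at h
  have hPSP : P * S * P = S * P := by
    rw [Matrix.sub_mul, Matrix.sub_mul, Matrix.one_mul, sub_eq_zero] at e2
    exact e2
  have hcomm : P * S = S * P := by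
    have h := congrArg Matrix.transpose hPSP
    simp only [Matrix.transpose_mul, hSsymm, hPsymm] at h
    -- h : P * (S * P) = P * S
    rw [← Matrix.mul_assoc, hPSP] at h
    exact h.symm
  -- Step 3: A = Uᵀ P U is diagonal with 0/1 entries
  obtain ⟨A, hAdef⟩ : ∃ A, A = Uᵀ * P * U := ⟨_, rfl⟩
  have hUAU : U * A * Uᵀ = P := by
    rw [hAdef]
    simp only [← Matrix.mul_assoc]
    rw [hUU, Matrix.one_mul, Matrix.mul_assoc, hUU, Matrix.mul_one]
  have cancel : ∀ {B C : Matrix (Fin m) (Fin m) ℝ}, U * B * Uᵀ = U * C * Uᵀ → B = C := by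
    intro B C h
    have h' := congrArg (fun M => Uᵀ * M * U) h
    simp only [← Matrix.mul_assoc] at h'
    rw [hU, Matrix.one_mul, Matrix.one_mul] at h'
    rwa [Matrix.mul_assoc, hU, Matrix.mul_one, Matrix.mul_assoc, hU, Matrix.mul_one] at h'
  have hAD : A * Matrix.diagonal l = Matrix.diagonal l * A := by
    apply cancel
    have h5 : (U * A * Uᵀ) * (U * Matrix.diagonal l * Uᵀ)
        = (U * Matrix.diagonal l * Uᵀ) * (U * A * Uᵀ) := by
      rw [hUAU, ← hXXt]; exact hcomm
    have hq : ∀ B : Matrix (Fin m) (Fin m) ℝ, B * Uᵀ * U = B := fun B => by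
      rw [Matrix.mul_assoc, hU, Matrix.mul_one]
    simp only [← Matrix.mul_assoc] at h5 ⊢
    rwa [hq (U * A), hq (U * Matrix.diagonal l)] at h5
  have hAsymm : Aᵀ = A := by
    rw [hAdef]
    simp only [Matrix.transpose_mul, Matrix.transpose_transpose, hPsymm]
    simp only [← Matrix.mul_assoc]
  have hAidem : A * A = A := by
    rw [hAdef]
    simp only [← Matrix.mul_assoc]
    rw [Matrix.mul_assoc (Uᵀ * P) U Uᵀ, hUU, Matrix.mul_one,
      Matrix.mul_assoc Uᵀ P P, hPidem]
  -- off-diagonal entries vanish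
  have hoff : ∀ i j, i ≠ j → A i j = 0 := by
    intro i j hij
    have h := congrFun (congrFun hAD i) j
    rw [Matrix.mul_diagonal, Matrix.diagonal_mul] at h
    have h0 : A i j * (l j - l i) = 0 := by linear_combination h
    rcases mul_eq_zero.mp h0 with h' | h'
    · exact h'
    · exact absurd (by linarith : l i = l j) (hdist i j hij)
  -- diagonal entries are 0 or 1
  have hdiag : ∀ i, A i i = 0 ∨ A i i = 1 := by
    intro i
    have h := congrFun (congrFun hAidem i) i
    rw [Matrix.mul_apply] at h
    have hsum : ∑ j, A i j * A j i = A i i * A i i := by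
      rw [Finset.sum_eq_single i]
      · intro j _ hj; rw [hoff i j (Ne.symm hj), zero_mul]
      · intro h'; exact absurd (Finset.mem_univ i) h'
    rw [hsum] at h
    have h0 : A i i * (A i i - 1) = 0 := by linear_combination h
    rcases mul_eq_zero.mp h0 with h' | h'
    · exact Or.inl h'
    · exact Or.inr (by linarith)
  set I : Finset (Fin m) := Finset.univ.filter (fun i => A i i = 1) with hI
  have hAdiagonal : A = Matrix.diagonal (fun i => if i ∈ I then (1 : ℝ) else 0) := by
    ext i j
    by_cases hij : i = j
    · subst hij
      rw [Matrix.diagonal_apply_eq]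
      by_cases hmem : i ∈ I
      · simp only [hmem, if_true]
        exact (Finset.mem_filter.mp hmem).2
      · simp only [hmem, if_false]
        rcases hdiag i with h' | h'
        · exact h'
        · exact absurd (Finset.mem_filter.mpr ⟨Finset.mem_univ i, h'⟩) hmem
    · rw [Matrix.diagonal_apply_ne _ hij]
      exact hoff i j hij
  refine ⟨I, ?_, ?_⟩
  · -- card bound via rank
    have hrankA : A.rank = P.rank := by
      rw [hAdef, Matrix.mul_assoc,
        Matrix.rank_mul_eq_right_of_isUnit_det Uᵀ (P * U) hdetUt,
        Matrix.rank_mul_eq_left_of_isUnit_det U P hdetU']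
    have hrankP : P.rank ≤ k := by
      calc P.rank = (W2 * W1).rank := by rw [hP]
        _ ≤ W2.rank := Matrix.rank_mul_le_left W2 W1
        _ ≤ Fintype.card (Fin k) := Matrix.rank_le_card_width W2
        _ = k := Fintype.card_fin k
    have hcard : A.rank = I.card := by
      rw [hAdiagonal, Matrix.rank_diagonal, Fintype.card_subtype]
      congr 1
      ext i
      simp only [Finset.mem_filter, Finset.mem_univ, true_and]
      by_cases hmem : i ∈ I <;> simp [hmem]
    calc I.card = A.rank := hcard.symm
      _ = P.rank := hrankA
      _ ≤ k := hrankP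
  · rw [← hAdiagonal, ← hP]
    exact hUAU.symm
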